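/- If a homeomorphism f : X → X of a compact metric space has the shadowing property and its non-wandering set Ω(f) is expansive (for the restriction f|_{Ω(f)}), then there exists ε > 0 such that for each r > 0 there exists k_r ∈ ℕ satisfying f^n(W^s_ε(x)) ⊆ W^s_r(f^n(x)) and f^{−n}(W^u_ε(x)) ⊆ W^u_r(f^{−n}(x)) for every x ∈ Ω(f) and n ≥ k_r. -/

import Mathlib

open Topology Filter Metric TopologicalSpace

namespace LS

variable {X Y : Type*} [MetricSpace X] [MetricSpace Y]

/-- finite forward iterates of a homeomorphism -/
def hpowAux (f : X ≃ₜ X) : ℕ → X ≃ₜ X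
  | 0 => Homeomorph.refl X
  | n+1 => (hpowAux f n).trans f

/-- `ℤ`-iterates of a homeomorphism: `hpow f k` is the `k`-th iterate `f^k`. -/
def hpow (f : X ≃ₜ X) : ℤ → X ≃ₜ X
  | Int.ofNat n => hpowAux f n
  | Int.negSucc n => (hpowAux f (n+1)).symm

/-- the `ℤ`-iteration map of `f` -/
def F (f : X ≃ₜ X) : ℤ → X → X := fun k => hpow f k

/-- δ-limit-pseudo-orbit for a system given by its iterate family `T` -/
def IsLimitPseudoOrbit (T : ℤ → Y → Y) (δ : ℝ) (x : ℤ → Y) : Prop :=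
  (∀ k : ℤ, dist (T 1 (x k)) (x (k+1)) ≤ δ) ∧
  Tendsto (fun k : ℤ => dist (T 1 (x k)) (x (k+1))) (cocompact ℤ) (𝓝 0)

/-- `z` ε-limit-shadows the sequence `x` -/
def LimitShadows (T : ℤ → Y → Y) (ε : ℝ) (x : ℤ → Y) (z : Y) : Prop :=
  (∀ k : ℤ, dist (T k z) (x k) ≤ ε) ∧
  Tendsto (fun k : ℤ => dist (T k z) (x k)) (cocompact ℤ) (𝓝 0)

/-- the L-shadowing property -/
def LShadowing (T : ℤ → Y → Y) : Prop :=
  ∀ ε > (0:ℝ), ∃ δ > (0:ℝ), ∀ x : ℤ → Y, IsLimitPseudoOrbit T δ x → ∃ z, LimitShadows T ε x z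

/-- the shadowing property -/
def Shadowing (T : ℤ → Y → Y) : Prop :=
  ∀ ε > (0:ℝ), ∃ δ > (0:ℝ), ∀ x : ℤ → Y,
    (∀ k : ℤ, dist (T 1 (x k)) (x (k+1)) < δ) → ∃ z, ∀ k : ℤ, dist (T k z) (x k) < ε

/-- local c-stable set -/
def Ws (f : X ≃ₜ X) (c : ℝ) (x : X) : Set X :=
  {y | ∀ k : ℤ, 0 ≤ k → dist (F f k y) (F f k x) ≤ c}

/-- local c-unstable set -/
def Wu (f : X ≃ₜ X) (c : ℝ) (x : X) : Set X :=
  {y | ∀ k : ℤ, k ≤ 0 → dist (F f k y) (F f k x) ≤ c}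

/-- stable set -/
def WsA (f : X ≃ₜ X) (x : X) : Set X :=
  {y | Tendsto (fun k : ℤ => dist (F f k y) (F f k x)) atTop (𝓝 0)}

/-- unstable set -/
def WuA (f : X ≃ₜ X) (x : X) : Set X :=
  {y | Tendsto (fun k : ℤ => dist (F f k y) (F f k x)) atBot (𝓝 0)}

/-- asymptotic local stable set -/
def Vs (f : X ≃ₜ X) (c : ℝ) (x : X) : Set X := WsA f x ∩ Ws f c x

/-- asymptotic local unstable set -/
def Vu (f : X ≃ₜ X) (c : ℝ) (x : X) : Set X := WuA f x ∩ Wu f c x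

/-- image of a nonempty compact set under a homeomorphism -/
def himg (f : X ≃ₜ X) (A : NonemptyCompacts X) : NonemptyCompacts X :=
  ⟨⟨f '' A, A.isCompact.image f.continuous⟩, A.nonempty.image f⟩

/-- the `ℤ`-iteration family of the induced hyperspace map `2^f` -/
def HF (f : X ≃ₜ X) : ℤ → NonemptyCompacts X → NonemptyCompacts X :=
  fun k A => himg (hpow f k) A

end LS

/-- the non-wandering set of `f` -/
def LS.Omega {X : Type*} [MetricSpace X] (f : X ≃ₜ X) : Set X :=
  {x | ∀ η > (0:ℝ), ∃ y : X, dist x y < η ∧ ∃ n : ℕ, 0 < n ∧ dist (LS.F f n y) x < η}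

namespace LS
variable {X : Type*} [MetricSpace X]

lemma hpowAux_apply_f (f : X ≃ₜ X) (n : ℕ) (x : X) :
    hpowAux f n (f x) = f (hpowAux f n x) := by
  induction n with
  | zero => rfl
  | succ n ih => simp only [hpowAux, Homeomorph.trans_apply, ih]

lemma F_zero (f : X ≃ₜ X) (x : X) : F f 0 x = x := rfl

lemma F_one (f : X ≃ₜ X) (x : X) : F f 1 x = f x := rfl

lemma F_add_one (f : X ≃ₜ X) (k : ℤ) (x : X) : F f (k+1) x = f (F f k x) := by
  cases k with
  | ofNat n =>
      show F f (Int.ofNat (n+1)) x = _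
      show hpowAux f (n+1) x = f (hpowAux f n x)
      simp [hpowAux]
  | negSucc n =>
      cases n with
      | zero =>
          show F f 0 x = f (F f (Int.negSucc 0) x)
          show x = f ((hpowAux f 1).symm x)
          simp [hpowAux]
      | succ m =>
          show F f (Int.negSucc m) x = f (F f (Int.negSucc (m+1)) x)
          show (hpowAux f (m+1)).symm x = f ((hpowAux f (m+2)).symm x)
          have h2 : (hpowAux f (m+2)) = (hpowAux f (m+1)).trans f := rfl
          rw [h2]
          apply (hpowAux f (m+1)).injective
          rw [hpowAux_apply_f]
          simp

lemma F_sub_one (f : X ≃ₜ X) (k : ℤ) (x : X) : F f (k-1) x = f.symm (F f k x) := by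
  have := F_add_one f (k-1) x
  rw [sub_add_cancel] at this
  rw [this]; simp

lemma F_add (f : X ≃ₜ X) (s t : ℤ) (x : X) : F f (s+t) x = F f s (F f t x) := by
  induction s using Int.induction_on with
  | zero => rw [zero_add]; rfl
  | succ n ih =>
      have h1 : ((n:ℤ)+1+t) = ((n:ℤ)+t)+1 := by ring
      rw [h1, F_add_one, ih, F_add_one]
  | pred n ih =>
      have h1 : (-(n:ℤ)-1+t) = (-(n:ℤ)+t)-1 := by ring
      rw [h1, F_sub_one, ih, F_sub_one]

lemma F_one_add (f : X ≃ₜ X) (k : ℤ) (x : X) : F f 1 (F f k x) = F f (k+1) x := by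
  rw [← F_add, add_comm]

lemma F_continuous (f : X ≃ₜ X) (t : ℤ) : Continuous (F f t) := (hpow f t).continuous

lemma F_symm (f : X ≃ₜ X) (k : ℤ) (x : X) : F f.symm k x = F f (-k) x := by
  induction k using Int.induction_on with
  | zero => rfl
  | succ n ih =>
      rw [F_add_one, ih, show (-((n:ℤ)+1)) = (-(n:ℤ))-1 by ring, F_sub_one]
  | pred n ih =>
      rw [show (-(n:ℤ)-1) = (-(n:ℤ))-1 by ring, F_sub_one, ih,
        show (-(-(n:ℤ)-1)) = (-(-(n:ℤ)))+1 by ring, F_add_one]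
      simp


lemma Omega_inv {f : X ≃ₜ X} {x : X} (hx : x ∈ Omega f) (t : ℤ) : F f t x ∈ Omega f := by
  intro η hη
  -- continuity of F f t at x
  obtain ⟨η', hη', hcont⟩ : ∃ η' > 0, ∀ a, dist a x < η' → dist (F f t a) (F f t x) < η := by
    have := Metric.continuous_iff.mp (F_continuous f t) x η hη
    obtain ⟨d, hd, h⟩ := this
    exact ⟨d, hd, fun a ha => h a ha⟩
  obtain ⟨y, hy1, n, hn, hy2⟩ := hx η' hη'
  refine ⟨F f t y, ?_, n, hn, ?_⟩
  · have : dist (F f t y) (F f t x) < η := hcont y (by rwa [dist_comm] at hy1)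
    rwa [dist_comm] at this
  · have h1 : F f n (F f t y) = F f t (F f n y) := by
      rw [← F_add, ← F_add, add_comm]
    rw [h1]
    exact hcont _ hy2

lemma Omega_limit {f : X ≃ₜ X} {x : ℕ → X} {l : X} (hx : ∀ i, x i ∈ Omega f)
    (hl : Tendsto x atTop (𝓝 l)) : l ∈ Omega f := by
  intro η hη
  obtain ⟨i, hi⟩ := (Metric.tendsto_atTop.mp hl (η/3) (by linarith)).imp (fun i h => h i le_rfl)
  obtain ⟨y, hy1, n, hn, hy2⟩ := hx i (η/3) (by linarith)
  refine ⟨y, ?_, n, hn, ?_⟩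
  · calc dist l y ≤ dist l (x i) + dist (x i) y := dist_triangle _ _ _
      _ < η/3 + η/3 := by rw [dist_comm l (x i)]; exact add_lt_add hi hy1
      _ < η := by linarith
  · calc dist (F f n y) l ≤ dist (F f n y) (x i) + dist (x i) l := dist_triangle _ _ _
      _ < η/3 + η/3 := add_lt_add hy2 hi
      _ < η := by linarith

lemma Omega_subset_symm (f : X ≃ₜ X) : Omega f ⊆ Omega f.symm := by
  intro x hx η hη
  obtain ⟨y, hy1, n, hn, hy2⟩ := hx η hη
  refine ⟨F f n y, by rwa [dist_comm] at hy2, n, hn, ?_⟩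
  have : F f.symm n (F f n y) = y := by
    rw [F_symm, ← F_add, neg_add_cancel, F_zero]
  rw [this]
  rwa [dist_comm] at hy1

lemma Omega_symm (f : X ≃ₜ X) : Omega f.symm = Omega f := by
  apply le_antisymm
  · have := Omega_subset_symm f.symm
    rwa [Homeomorph.symm_symm] at this
  · exact Omega_subset_symm f

lemma Omega_omegaLimit {f : X ≃ₜ X} {v w : X} {φ : ℕ → ℕ} (hφ : StrictMono φ)
    (hl : Tendsto (fun i => F f (φ i) v) atTop (𝓝 w)) : w ∈ Omega f := by
  intro η hη
  obtain ⟨i₀, hi₀⟩ := Metric.tendsto_atTop.mp hl η hη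
  refine ⟨F f (φ i₀) v, by rw [dist_comm]; exact hi₀ i₀ le_rfl, φ (i₀+1) - φ i₀,
    by have := hφ (show i₀ < i₀+1 by omega); omega, ?_⟩
  have h1 : F f ((φ (i₀+1) - φ i₀ : ℕ) : ℤ) (F f (φ i₀) v) = F f (φ (i₀+1)) v := by
    rw [← F_add]
    congr 1
    have := hφ (show i₀ < i₀+1 by omega)
    omega
  rw [h1]
  exact hi₀ _ (by omega)

section Cpt
variable [CompactSpace X]

lemma P1 {f : X ≃ₜ X} {c : ℝ}
    (hexp : ∀ x ∈ Omega f, ∀ y ∈ Omega f,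
      (∀ k : ℤ, dist (F f k y) (F f k x) ≤ c) → y = x)
    {u v : X} (hu : u ∈ Omega f) (hv : ∀ t : ℤ, 0 ≤ t → dist (F f t v) (F f t u) ≤ c) :
    Tendsto (fun n : ℕ => dist (F f n v) (F f n u)) atTop (𝓝 0) := by
  by_contra h
  rw [Metric.tendsto_atTop] at h
  push_neg at h
  obtain ⟨r, hr, h⟩ := h
  have hfreq : ∃ᶠ n : ℕ in atTop, r ≤ dist (F f (n:ℤ) v) (F f (n:ℤ) u) := by
    rw [Filter.frequently_atTop]
    intro a
    obtain ⟨n, hn1, hn2⟩ := h a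
    refine ⟨n, hn1, ?_⟩
    rwa [Real.dist_eq, sub_zero, abs_of_nonneg dist_nonneg] at hn2
  obtain ⟨φ, hφ, hφr⟩ := Filter.extraction_of_frequently_atTop hfreq
  -- pass to a convergent subsequence of pairs
  obtain ⟨⟨a, b⟩, -, ψ, hψ, hlim⟩ := isCompact_univ.tendsto_subseq
    (x := fun i => ((F f (φ i) u, F f (φ i) v) : X × X)) (fun i => Set.mem_univ _)
  have ha : Tendsto (fun i => F f (φ (ψ i)) u) atTop (𝓝 a) :=
    (continuous_fst.tendsto _).comp hlim
  have hb : Tendsto (fun i => F f (φ (ψ i)) v) atTop (𝓝 b) :=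
    (continuous_snd.tendsto _).comp hlim
  have haΩ : a ∈ Omega f := Omega_limit (fun i => Omega_inv hu _) ha
  have hbΩ : b ∈ Omega f := Omega_omegaLimit (hφ.comp hψ) hb
  have hbound : ∀ t : ℤ, dist (F f t b) (F f t a) ≤ c := by
    intro t
    have hcont : Tendsto (fun i => dist (F f t (F f (φ (ψ i)) v)) (F f t (F f (φ (ψ i)) u)))
        atTop (𝓝 (dist (F f t b) (F f t a))) :=
      (((F_continuous f t).tendsto b).comp hb).dist (((F_continuous f t).tendsto a).comp ha)
    refine le_of_tendsto hcont ?_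
    filter_upwards [Filter.eventually_ge_atTop t.natAbs] with i hi
    have hge : 0 ≤ t + (φ (ψ i) : ℤ) := by
      have h1 : (i : ℤ) ≤ (φ (ψ i) : ℤ) := by
        exact_mod_cast ((hφ.comp hψ).le_apply)
      have h2 : (t.natAbs : ℤ) ≤ i := by exact_mod_cast hi
      omega
    have := hv (t + (φ (ψ i) : ℤ)) hge
    rwa [F_add, F_add] at this
  have hba : b = a := hexp a haΩ b hbΩ hbound
  have hdr : r ≤ dist b a := by
    refine ge_of_tendsto (hb.dist ha) ?_
    filter_upwards with i using hφr (ψ i)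
  rw [hba, dist_self] at hdr
  linarith

lemma shadowing_symm {f : X ≃ₜ X} (hsh : Shadowing (F f)) : Shadowing (F f.symm) := by
  intro ε hε
  obtain ⟨δ, hδ, hs⟩ := hsh ε hε
  obtain ⟨δ', hδ', hu⟩ : ∃ δ' > 0, ∀ a b : X, dist a b < δ' → dist (f a) (f b) < δ := by
    have := Metric.uniformContinuous_iff.mp
      (CompactSpace.uniformContinuous_of_continuous f.continuous) δ hδ
    obtain ⟨d, hd, h⟩ := this
    exact ⟨d, hd, fun a b hab => h hab⟩
  refine ⟨δ', hδ', fun x hx => ?_⟩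
  have hx' : ∀ k : ℤ, dist (F f 1 (x (k+1))) (x k) < δ := by
    intro k
    have h1 : dist (f.symm (x k)) (x (k+1)) < δ' := hx k
    have h2 := hu _ _ h1
    rw [Homeomorph.apply_symm_apply] at h2
    rw [F_one, dist_comm]
    exact h2
  obtain ⟨z, hz⟩ := hs (fun k => x (-k)) (by
    intro k
    have := hx' (-(k+1))
    rw [show (-(k+1)+1 : ℤ) = -k by ring] at this
    exact this)
  refine ⟨z, fun k => ?_⟩
  have := hz (-k)
  rw [show (-(-k) : ℤ) = k by ring] at this
  rwa [F_symm]

lemma P2 {f : X ≃ₜ X} (hsh : Shadowing (F f)) {u : X} (hu : u ∈ Omega f) :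
    ∀ η > (0:ℝ), ∀ M : ℕ, ∃ q : X, ∃ n : ℕ, M ≤ n ∧ 0 < n ∧
      dist q u < η ∧ dist (F f n q) u < η := by
  intro η hη M
  obtain ⟨δ, hδ, hs⟩ := hsh (η/2) (by linarith)
  set η₁ : ℝ := min (η/2) (δ/2) with hη₁def
  have hη₁ : 0 < η₁ := by positivity
  obtain ⟨p, hp, n₀, hn₀, hret⟩ := hu η₁ hη₁
  have hn₀' : (0:ℤ) < (n₀:ℤ) := by exact_mod_cast hn₀
  set w : ℤ → X := fun k => F f (k % (n₀:ℤ)) p with hw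
  have hps : ∀ k : ℤ, dist (F f 1 (w k)) (w (k+1)) < δ := by
    intro k
    set r : ℤ := k % (n₀:ℤ) with hr
    have h0 : 0 ≤ r := Int.emod_nonneg k (by omega)
    have hlt : r < n₀ := Int.emod_lt_of_pos k hn₀'
    have hsucc : (k+1) % (n₀:ℤ) = (r+1) % (n₀:ℤ) := by
      conv_lhs => rw [← Int.emod_add_mul_ediv k (n₀:ℤ)]
      rw [show k % ↑n₀ + ↑n₀ * (k / ↑n₀) + 1 = (r + 1) + n₀ * (k / n₀) by rw [hr]; ring]
      apply Int.add_mul_emod_self_left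
    have hF1 : F f 1 (w k) = F f (r+1) p := by
      rw [hw]
      simp only
      rw [← F_add, add_comm]
    rcases lt_or_eq_of_le (by omega : r + 1 ≤ (n₀:ℤ)) with hcase | hcase
    · have : (r+1) % (n₀:ℤ) = r+1 := Int.emod_eq_of_lt (by omega) hcase
      have hwk1 : w (k+1) = F f (r+1) p := by rw [hw]; simp only; rw [hsucc, this]
      rw [hF1, hwk1, dist_self]
      exact hδ
    · have : (r+1) % (n₀:ℤ) = 0 := by rw [hcase]; exact Int.emod_self
      have hwk1 : w (k+1) = p := by rw [hw]; simp only; rw [hsucc, this, F_zero]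
      rw [hF1, hwk1, hcase]
      calc dist (F f (n₀:ℤ) p) p ≤ dist (F f (n₀:ℤ) p) u + dist u p := dist_triangle _ _ _
        _ < η₁ + η₁ := add_lt_add hret hp
        _ ≤ δ := by
            have : η₁ ≤ δ/2 := min_le_right _ _
            linarith
  obtain ⟨z, hz⟩ := hs w hps
  have hzp : dist z p < η/2 := by
    have := hz 0
    rw [hw] at this
    simp only [Int.zero_emod] at this
    rw [F_zero, F_zero] at this
    exact this
  have hη₁' : η₁ ≤ η/2 := min_le_left _ _
  refine ⟨z, (M+1) * n₀, by nlinarith [Nat.one_le_iff_ne_zero.mpr (by omega : M+1 ≠ 0)], by positivity, ?_, ?_⟩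
  · calc dist z u ≤ dist z p + dist p u := dist_triangle _ _ _
      _ < η/2 + η₁ := add_lt_add hzp (by rw [dist_comm]; exact hp)
      _ ≤ η := by linarith
  · have := hz (((M+1) * n₀ : ℕ) : ℤ)
    rw [hw] at this
    simp only at this
    have hmod : (((M+1) * n₀ : ℕ) : ℤ) % (n₀:ℤ) = 0 := by
      push_cast
      exact Int.mul_emod_left _ _
    rw [hmod, F_zero] at this
    calc dist (F f (((M+1) * n₀ : ℕ) : ℤ) z) u
        ≤ dist (F f (((M+1) * n₀ : ℕ) : ℤ) z) p + dist p u := dist_triangle _ _ _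
      _ < η/2 + η₁ := add_lt_add this (by rw [dist_comm]; exact hp)
      _ ≤ η := by linarith

lemma P3 {f : X ≃ₜ X} (hsh : Shadowing (F f)) {u v : X} (hu : u ∈ Omega f)
    (hfw : Tendsto (fun n : ℕ => dist (F f n v) (F f n u)) atTop (𝓝 0))
    (hbw : Tendsto (fun n : ℕ => dist (F f (-(n:ℤ)) v) (F f (-(n:ℤ)) u)) atTop (𝓝 0)) :
    v ∈ Omega f := by
  intro η hη
  obtain ⟨δ, hδ, hs⟩ := hsh (η/2) (by linarith)
  -- tails
  obtain ⟨K₁, hK₁⟩ := Metric.tendsto_atTop.mp hfw (δ/2) (by linarith)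
  obtain ⟨K₂, hK₂⟩ := Metric.tendsto_atTop.mp hbw (δ/2) (by linarith)
  set K : ℕ := max K₁ K₂ with hK
  have hle1 : K₁ ≤ K := le_max_left _ _
  have hle2 : K₂ ≤ K := le_max_right _ _
  have htail : ∀ t : ℤ, (K:ℤ) ≤ |t| → dist (F f t v) (F f t u) < δ/2 := by
    intro t ht
    rcases le_or_gt 0 t with h | h
    · have h1 : t = ((t.toNat : ℕ) : ℤ) := by omega
      have h2 : K₁ ≤ t.toNat := by rw [abs_of_nonneg h] at ht; omega
      have := hK₁ t.toNat h2
      rw [Real.dist_eq, sub_zero, abs_of_nonneg dist_nonneg] at this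
      rwa [h1]
    · have h1 : t = -(((-t).toNat : ℕ) : ℤ) := by omega
      have h2 : K₂ ≤ (-t).toNat := by rw [abs_of_neg h] at ht; omega
      have := hK₂ (-t).toNat h2
      rw [Real.dist_eq, sub_zero, abs_of_nonneg dist_nonneg] at this
      rwa [h1]
  -- neighborhood of u on which all iterates |t| ≤ K+1 stay δ/2-close
  set S : Finset ℤ := Finset.Icc (-(K:ℤ)-1) ((K:ℤ)+1) with hS
  set U : Set X := ⋂ t ∈ S, (fun a => F f t a) ⁻¹' (Metric.ball (F f t u) (δ/2)) with hU
  have hUopen : IsOpen U := isOpen_biInter_finset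
    (fun t _ => (Metric.isOpen_ball).preimage (F_continuous f t))
  have hUmem : u ∈ U := by
    rw [hU]
    refine Set.mem_iInter₂.mpr fun t _ => ?_
    simp [Metric.mem_ball, hδ]
  obtain ⟨η₂, hη₂, hball⟩ := Metric.isOpen_iff.mp hUopen u hUmem
  have hballU : ∀ a : X, dist a u < η₂ → ∀ t : ℤ, |t| ≤ (K:ℤ)+1 →
      dist (F f t a) (F f t u) < δ/2 := by
    intro a ha t ht
    rw [abs_le] at ht
    have haU : a ∈ U := hball (Metric.mem_ball.mpr ha)
    rw [hU] at haU
    have := Set.mem_iInter₂.mp haU t (by rw [hS]; rw [Finset.mem_Icc]; omega)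
    simpa [Metric.mem_ball] using this
  -- a long return for u
  obtain ⟨q, n, hnM, hnpos, hqu, hqru⟩ := P2 hsh hu η₂ hη₂ (2*K+2)
  set N : ℤ := (n : ℤ) with hN
  have hNge : (2*(K:ℤ)+2) ≤ N := by rw [hN]; exact_mod_cast hnM
  -- the pseudo-orbit
  set w : ℤ → X := fun k =>
    if k ≤ (K:ℤ) then F f k v else if k ≤ N - K - 1 then F f k q else F f (k - N) v with hw
  have hps : ∀ k : ℤ, dist (F f 1 (w k)) (w (k+1)) < δ := by
    intro k
    rcases le_or_gt (k+1) (K:ℤ) with h1 | h1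
    · -- both in first branch
      have hwk : w k = F f k v := by rw [hw]; simp only [if_pos (by omega : k ≤ (K:ℤ))]
      have hwk1 : w (k+1) = F f (k+1) v := by rw [hw]; simp only [if_pos h1]
      rw [hwk, hwk1, F_one_add, dist_self]
      exact hδ
    rcases le_or_gt k (K:ℤ) with h2 | h2
    · -- k = K : jump from v-orbit to q-orbit
      have hk : k = (K:ℤ) := by omega
      have hwk : w k = F f k v := by rw [hw]; simp only [if_pos h2]
      have hwk1 : w (k+1) = F f (k+1) q := by
        rw [hw]; simp only [if_neg (by omega : ¬ (k+1 ≤ (K:ℤ))),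
          if_pos (by omega : k+1 ≤ N - K - 1)]
      rw [hwk, hwk1, F_one_add]
      calc dist (F f (k+1) v) (F f (k+1) q)
          ≤ dist (F f (k+1) v) (F f (k+1) u) + dist (F f (k+1) u) (F f (k+1) q) :=
            dist_triangle _ _ _
        _ < δ/2 + δ/2 := add_lt_add (htail _ (by rw [hk]; rw [abs_of_nonneg (by omega)]; omega))
            (by rw [dist_comm]; exact hballU q hqu _ (by rw [hk, abs_of_nonneg (by omega)]))
        _ = δ := by ring
    rcases le_or_gt (k+1) (N - K - 1) with h3 | h3
    · -- both in q-branch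
      have hwk : w k = F f k q := by
        rw [hw]; simp only [if_neg (by omega : ¬ (k ≤ (K:ℤ))), if_pos (by omega : k ≤ N - K - 1)]
      have hwk1 : w (k+1) = F f (k+1) q := by
        rw [hw]; simp only [if_neg (by omega : ¬ (k+1 ≤ (K:ℤ))), if_pos h3]
      rw [hwk, hwk1, F_one_add, dist_self]
      exact hδ
    rcases le_or_gt k (N - K - 1) with h4 | h4
    · -- k = N - K - 1 : jump from q-orbit back to v-orbit
      have hk : k = N - (K:ℤ) - 1 := by omega
      have hwk : w k = F f k q := by
        rw [hw]; simp only [if_neg (by omega : ¬ (k ≤ (K:ℤ))), if_pos h4]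
      have hwk1 : w (k+1) = F f (k+1-N) v := by
        rw [hw]; simp only [if_neg (by omega : ¬ (k+1 ≤ (K:ℤ))),
          if_neg (by omega : ¬ (k+1 ≤ N - K - 1))]
      rw [hwk, hwk1, F_one_add]
      have hkk : k + 1 = N + (-(K:ℤ)) := by omega
      have e1 : F f (k+1) q = F f (-(K:ℤ)) (F f N q) := by
        rw [hkk, add_comm N, F_add]
      have e2 : (k+1-N : ℤ) = -(K:ℤ) := by omega
      rw [e1, e2]
      calc dist (F f (-(K:ℤ)) (F f N q)) (F f (-(K:ℤ)) v)
          ≤ dist (F f (-(K:ℤ)) (F f N q)) (F f (-(K:ℤ)) u)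
            + dist (F f (-(K:ℤ)) u) (F f (-(K:ℤ)) v) := dist_triangle _ _ _
        _ < δ/2 + δ/2 := add_lt_add
            (hballU (F f N q) hqru _ (by rw [abs_of_nonpos (by omega)]; omega))
            (by rw [dist_comm]; exact htail _ (by rw [abs_of_nonpos (by omega)]; omega))
        _ = δ := by ring
    · -- both in last branch
      have hwk : w k = F f (k - N) v := by
        rw [hw]; simp only [if_neg (by omega : ¬ (k ≤ (K:ℤ))), if_neg (by omega : ¬ (k ≤ N - K - 1))]
      have hwk1 : w (k+1) = F f (k+1-N) v := by
        rw [hw]; simp only [if_neg (by omega : ¬ (k+1 ≤ (K:ℤ))),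
          if_neg (by omega : ¬ (k+1 ≤ N - K - 1))]
      rw [hwk, hwk1, F_one_add, show (k-N)+1 = k+1-N by ring, dist_self]
      exact hδ
  obtain ⟨z, hz⟩ := hs w hps
  have hw0 : w 0 = v := by
    rw [hw]; simp only [if_pos (by omega : (0:ℤ) ≤ (K:ℤ))]; exact F_zero f v
  have hwN : w N = v := by
    rw [hw]; simp only [if_neg (by omega : ¬ (N ≤ (K:ℤ))), if_neg (by omega : ¬ (N ≤ N - K - 1))]
    rw [sub_self]; exact F_zero f v
  refine ⟨z, ?_, n, by omega, ?_⟩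
  · have := hz 0
    rw [hw0, F_zero] at this
    rw [dist_comm]
    linarith
  · have := hz N
    rw [hwN] at this
    have hNn : F f N z = F f (n:ℤ) z := rfl
    rw [hNn] at this
    linarith

lemma hexp_symm {f : X ≃ₜ X} {c : ℝ}
    (hexp : ∀ x ∈ Omega f, ∀ y ∈ Omega f,
      (∀ k : ℤ, dist (F f k y) (F f k x) ≤ c) → y = x) :
    ∀ x ∈ Omega f.symm, ∀ y ∈ Omega f.symm,
      (∀ k : ℤ, dist (F f.symm k y) (F f.symm k x) ≤ c) → y = x := by
  intro x hx y hy h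
  rw [Omega_symm] at hx hy
  refine hexp x hx y hy fun k => ?_
  have := h (-k)
  rwa [F_symm, F_symm, neg_neg] at this

lemma MAIN {f : X ≃ₜ X} (hsh : Shadowing (F f)) {c : ℝ}
    (hexp : ∀ x ∈ Omega f, ∀ y ∈ Omega f,
      (∀ k : ℤ, dist (F f k y) (F f k x) ≤ c) → y = x) :
    ∀ r > (0:ℝ), ∃ k : ℕ, ∀ x ∈ Omega f, ∀ y : X,
      (∀ t : ℤ, 0 ≤ t → dist (F f t y) (F f t x) ≤ c) →
      ∀ t : ℤ, (k:ℤ) ≤ t → dist (F f t y) (F f t x) ≤ r := by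
  intro r hr
  by_contra hcon
  push_neg at hcon
  choose x hx y hy T hT hTd using hcon
  -- the sequence of pairs at the separation times
  obtain ⟨⟨a, b⟩, -, ψ, hψ, hlim⟩ := isCompact_univ.tendsto_subseq
    (x := fun i : ℕ => ((F f (T i) (x i), F f (T i) (y i)) : X × X)) (fun i => Set.mem_univ _)
  have ha : Tendsto (fun i => F f (T (ψ i)) (x (ψ i))) atTop (𝓝 a) :=
    (continuous_fst.tendsto _).comp hlim
  have hb : Tendsto (fun i => F f (T (ψ i)) (y (ψ i))) atTop (𝓝 b) :=
    (continuous_snd.tendsto _).comp hlim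
  have haΩ : a ∈ Omega f := Omega_limit (fun i => Omega_inv (hx (ψ i)) _) ha
  have hbound : ∀ t : ℤ, dist (F f t b) (F f t a) ≤ c := by
    intro t
    have hcont : Tendsto
        (fun i => dist (F f t (F f (T (ψ i)) (y (ψ i)))) (F f t (F f (T (ψ i)) (x (ψ i)))))
        atTop (𝓝 (dist (F f t b) (F f t a))) :=
      (((F_continuous f t).tendsto b).comp hb).dist (((F_continuous f t).tendsto a).comp ha)
    refine le_of_tendsto hcont ?_
    filter_upwards [Filter.eventually_ge_atTop t.natAbs] with i hi
    have hge : 0 ≤ t + T (ψ i) := by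
      have h1 : ((ψ i : ℕ) : ℤ) ≤ T (ψ i) := hT (ψ i)
      have h2 : (i : ℤ) ≤ ((ψ i : ℕ) : ℤ) := by exact_mod_cast hψ.le_apply
      have h3 : (t.natAbs : ℤ) ≤ (i : ℤ) := by exact_mod_cast hi
      omega
    have := hy (ψ i) (t + T (ψ i)) hge
    rwa [F_add, F_add] at this
  have hfw : Tendsto (fun n : ℕ => dist (F f n b) (F f n a)) atTop (𝓝 0) :=
    P1 hexp haΩ (fun t _ => hbound t)
  have hbw : Tendsto (fun n : ℕ => dist (F f (-(n:ℤ)) b) (F f (-(n:ℤ)) a)) atTop (𝓝 0) := by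
    have h1 := P1 (hexp_symm hexp) ((Omega_symm f).symm ▸ haΩ)
      (u := a) (v := b) (fun t _ => by rw [F_symm, F_symm]; exact hbound (-t))
    have h2 : (fun n : ℕ => dist (F f.symm n b) (F f.symm n a))
        = fun n : ℕ => dist (F f (-(n:ℤ)) b) (F f (-(n:ℤ)) a) := by
      funext n; rw [F_symm, F_symm]
    rwa [h2] at h1
  have hbΩ : b ∈ Omega f := P3 hsh haΩ hfw hbw
  have hba : b = a := hexp a haΩ b hbΩ hbound
  have hdr : r ≤ dist b a := by
    refine ge_of_tendsto (hb.dist ha) ?_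
    filter_upwards with i using le_of_lt (hTd (ψ i))
  rw [hba, dist_self] at hdr
  linarith
end Cpt

end LS

/-- shadowing plus expansiveness of the non-wandering set gives uniform
contractions on the local stable/unstable sets of non-wandering points. -/
theorem stmt_6 {X : Type*} [MetricSpace X] [CompactSpace X] (f : X ≃ₜ X)
    (hsh : LS.Shadowing (LS.F f))
    (hexp : ∃ c > (0:ℝ), ∀ x ∈ LS.Omega f, ∀ y ∈ LS.Omega f,
      (∀ k : ℤ, dist (LS.F f k y) (LS.F f k x) ≤ c) → y = x) :
    ∃ ε > (0:ℝ), ∀ r > (0:ℝ), ∃ k : ℕ, ∀ x ∈ LS.Omega f, ∀ n : ℕ, k ≤ n →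
      (LS.F f n '' LS.Ws f ε x ⊆ LS.Ws f r (LS.F f n x)) ∧
      (LS.F f (-(n:ℤ)) '' LS.Wu f ε x ⊆ LS.Wu f r (LS.F f (-(n:ℤ)) x)) := by
  obtain ⟨c, hc, hexpc⟩ := hexp
  refine ⟨c, hc, fun r hr => ?_⟩
  obtain ⟨k₁, hk₁⟩ := LS.MAIN hsh hexpc r hr
  obtain ⟨k₂, hk₂⟩ := LS.MAIN (LS.shadowing_symm hsh) (LS.hexp_symm hexpc) r hr
  refine ⟨max k₁ k₂, fun x hx n hn => ⟨?_, ?_⟩⟩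
  · rintro - ⟨y, hy, rfl⟩
    intro m hm
    have h1 : LS.F f m (LS.F f n y) = LS.F f (m + n) y := by rw [← LS.F_add]
    have h2 : LS.F f m (LS.F f n x) = LS.F f (m + n) x := by rw [← LS.F_add]
    rw [h1, h2]
    refine hk₁ x hx y (fun t ht => hy t ht) (m + n) ?_
    have : (k₁ : ℤ) ≤ (n : ℤ) := by
      have : k₁ ≤ n := le_trans (le_max_left _ _) hn
      exact_mod_cast this
    omega
  · rintro - ⟨y, hy, rfl⟩
    intro m hm
    have hx' : x ∈ LS.Omega f.symm := (LS.Omega_symm f).symm ▸ hx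
    have hy' : ∀ t : ℤ, 0 ≤ t → dist (LS.F f.symm t y) (LS.F f.symm t x) ≤ c := by
      intro t ht
      rw [LS.F_symm, LS.F_symm]
      exact hy (-t) (by omega)
    have h1 : LS.F f m (LS.F f (-(n:ℤ)) y) = LS.F f.symm (-m + n) y := by
      rw [LS.F_symm, ← LS.F_add]
      congr 1
      ring
    have h2 : LS.F f m (LS.F f (-(n:ℤ)) x) = LS.F f.symm (-m + n) x := by
      rw [LS.F_symm, ← LS.F_add]
      congr 1
      ring
    rw [h1, h2]
    refine hk₂ x hx' y hy' (-m + n) ?_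
    have : (k₂ : ℤ) ≤ (n : ℤ) := by
      have : k₂ ≤ n := le_trans (le_max_right _ _) hn
      exact_mod_cast this
    omega
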